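/- Let V be a finite-dimensional real normed vector space, let C be an open subset of the dual space V* such that t·φ ∈ C whenever φ ∈ C and t > 0, let ω ∈ C, and let E be a real number. Then the set S := {A ∈ V : φ(A) ≥ 0 for every φ ∈ C, and ω(A) ≤ E} is bounded. Moreover, if Λ ⊆ V is an additive subgroup which is discrete in V, then S ∩ Λ is a finite set. -/

import Mathlib

set_option synthInstance.maxHeartbeats 400000


/- The finite-dimensional cone argument: if `C` is an open cone in the dual of a
finite-dimensional real normed space `V` containing `ω`, then
`S = {A : φ(A) ≥ 0 ∀ φ ∈ C, ω(A) ≤ E}` is bounded, and its intersection with any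
discrete additive subgroup of `V` is finite. -/
theorem stmt19 {V : Type*} [NormedAddCommGroup V] [NormedSpace ℝ V]
    [FiniteDimensional ℝ V]
    (C : Set (V →L[ℝ] ℝ)) (hopen : IsOpen C)
    (hcone : ∀ φ ∈ C, ∀ t : ℝ, 0 < t → t • φ ∈ C)
    (ω : V →L[ℝ] ℝ) (hω : ω ∈ C) (E : ℝ) :
    Bornology.IsBounded {A : V | (∀ φ ∈ C, 0 ≤ φ A) ∧ ω A ≤ E} ∧
    ∀ Λ : AddSubgroup V, DiscreteTopology Λ →
      ({A : V | (∀ φ ∈ C, 0 ≤ φ A) ∧ ω A ≤ E} ∩ (Λ : Set V)).Finite := by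
  set S := {A : V | (∀ φ ∈ C, 0 ≤ φ A) ∧ ω A ≤ E} with hS
  obtain ⟨ε, hε, hball⟩ := Metric.isOpen_iff.mp hopen ω hω
  have hbd : S ⊆ Metric.closedBall 0 (2 * E / ε) := by
    intro A hA
    obtain ⟨hpos, hle⟩ := hA
    have hE : 0 ≤ E := le_trans (hpos ω hω) hle
    rcases eq_or_ne A 0 with rfl | hA0
    · simp only [Metric.mem_closedBall, dist_zero_right, norm_zero]
      positivity
    · obtain ⟨g, hg1, hgA⟩ := exists_dual_vector ℝ A (norm_ne_zero_iff.mpr hA0)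
      have key : ∀ ψ : V →L[ℝ] ℝ, ‖ψ‖ < ε → -E ≤ ψ A := by
        intro ψ hψ
        have hmem : ω + ψ ∈ C := by
          apply hball
          simp [Metric.mem_ball, dist_eq_norm, hψ]
        have := hpos _ hmem
        simp only [ContinuousLinearMap.add_apply] at this
        linarith [hle]
      have hψn : ‖(-(ε / 2)) • g‖ < ε := by
        have h2 : ‖(-(ε / 2)) • g‖ = ‖(-(ε / 2) : ℝ)‖ * ‖g‖ := norm_smul _ g
        rw [h2, hg1, mul_one, Real.norm_eq_abs, abs_neg,
          abs_of_pos (by linarith : (0:ℝ) < ε / 2)]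
        linarith
      have := key _ hψn
      simp only [ContinuousLinearMap.smul_apply, hgA] at this
      simp only [Metric.mem_closedBall, dist_zero_right]
      rw [RCLike.ofReal_real_eq_id, id, smul_eq_mul] at this
      rw [le_div_iff₀ hε]
      nlinarith [norm_nonneg A]
  constructor
  · exact (Metric.isBounded_closedBall).subset hbd
  · intro Λ hΛ
    have hcl : IsClosed (Λ : Set V) := AddSubgroup.isClosed_of_discrete
    have hcpt : IsCompact (Metric.closedBall (0:V) (2 * E / ε) ∩ (Λ : Set V)) :=
      (isCompact_closedBall 0 _).inter_right hcl
    have hsub : S ∩ (Λ : Set V) ⊆ Metric.closedBall 0 (2 * E / ε) ∩ (Λ : Set V) :=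
      Set.inter_subset_inter_left _ hbd
    have hdisc : DiscreteTopology (Metric.closedBall (0:V) (2 * E / ε) ∩ (Λ : Set V) : Set V) :=
      DiscreteTopology.of_subset hΛ (Set.inter_subset_right)
    exact (hcpt.finite (isDiscrete_iff_discreteTopology.mpr hdisc)).subset hsub
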